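/- For every h > 0 and every integer β, the discrete analogue D_1 of the operator d²/dx² − 1 inverts G_1 on the lattice: (2/(1−e^{2h})) · [ (1+e^{2h})·G_1(hβ) − e^h·G_1(h(β−1)) − e^h·G_1(h(β+1)) ] = δ_d(β), where δ_d(β) = 1 if β = 0 and δ_d(β) = 0 otherwise. -/

import Mathlib

/-- `G₁(x) = sgn(x)·(eˣ − e⁻ˣ)/4`, with `sgn 0 = 0`. -/
noncomputable def G1 (x : ℝ) : ℝ := Real.sign x * (Real.exp x - Real.exp (-x)) / 4

lemma G1_of_nonneg {x : ℝ} (hx : 0 ≤ x) : G1 x = (Real.exp x - Real.exp (-x)) / 4 := by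
  rcases hx.eq_or_lt with rfl | hx
  · simp [G1]
  · simp [G1, Real.sign_of_pos hx]

lemma G1_even (x : ℝ) : G1 (-x) = G1 x := by
  rcases lt_trichotomy x 0 with hx | rfl | hx
  · simp only [G1, Real.sign_of_pos (neg_pos.2 hx), Real.sign_of_neg hx, neg_neg]
    ring
  · simp [G1]
  · simp only [G1, Real.sign_of_pos hx, Real.sign_of_neg (neg_neg_of_pos hx), neg_neg]
    ring

lemma G1_key {h x : ℝ} (hh : 0 < h) (hx : h ≤ x) :
    (1 + Real.exp (2 * h)) * G1 x - Real.exp h * G1 (x - h) - Real.exp h * G1 (x + h) = 0 := by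
  rw [G1_of_nonneg (by linarith), G1_of_nonneg (by linarith), G1_of_nonneg (by linarith)]
  rw [show (2 : ℝ) * h = h + h by ring, Real.exp_add,
    show x - h = x + (-h) by ring, Real.exp_add,
    show -(x + -h) = -x + h by ring, Real.exp_add,
    Real.exp_add x h, show -(x + h) = -x + -h by ring, Real.exp_add,
    Real.exp_neg h]
  have he := Real.exp_ne_zero h
  field_simp
  ring

theorem discrete_analogue_inverts_G1 (h : ℝ) (hh : 0 < h) (β : ℤ) :
    2 / (1 - Real.exp (2 * h)) *
        ((1 + Real.exp (2 * h)) * G1 (h * (β : ℝ))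
          - Real.exp h * G1 (h * ((β : ℝ) - 1))
          - Real.exp h * G1 (h * ((β : ℝ) + 1)))
      = if β = 0 then 1 else 0 := by
  have h1 : (1 : ℝ) < Real.exp (2 * h) := by
    rw [show (1 : ℝ) = Real.exp 0 from (Real.exp_zero).symm]
    exact Real.exp_lt_exp.2 (by linarith)
  have hne : 1 - Real.exp (2 * h) ≠ 0 := by linarith
  rcases lt_trichotomy β 0 with hb | rfl | hb
  · -- β ≤ -1
    have hb1 : (β : ℝ) ≤ -1 := by exact_mod_cast (by omega : β ≤ -1)
    have hx : h ≤ h * (-(β : ℝ)) := by nlinarith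
    have e1 : G1 (h * (β : ℝ)) = G1 (h * (-(β : ℝ))) := by
      rw [← G1_even]; ring_nf
    have e2 : G1 (h * ((β : ℝ) - 1)) = G1 (h * (-(β : ℝ)) + h) := by
      rw [← G1_even (h * ((β : ℝ) - 1))]; ring_nf
    have e3 : G1 (h * ((β : ℝ) + 1)) = G1 (h * (-(β : ℝ)) - h) := by
      rw [← G1_even (h * ((β : ℝ) + 1))]; ring_nf
    rw [e1, e2, e3, if_neg (by omega)]
    have := G1_key hh hx
    linear_combination (2 / (1 - Real.exp (2 * h))) * this
  · -- β = 0
    rw [if_pos rfl]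
    have e0 : G1 (h * ((0 : ℤ) : ℝ)) = 0 := by norm_num [G1]
    have em : G1 (h * (((0 : ℤ) : ℝ) - 1)) = (Real.exp h - Real.exp (-h)) / 4 := by
      rw [show h * (((0 : ℤ) : ℝ) - 1) = -h by push_cast; ring, G1_even,
        G1_of_nonneg hh.le]
    have ep : G1 (h * (((0 : ℤ) : ℝ) + 1)) = (Real.exp h - Real.exp (-h)) / 4 := by
      rw [show h * (((0 : ℤ) : ℝ) + 1) = h by push_cast; ring, G1_of_nonneg hh.le]
    rw [e0, em, ep]
    rw [show (2 : ℝ) * h = h + h by ring, Real.exp_add, Real.exp_neg h] at *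
    have he := Real.exp_ne_zero h
    have hne2 : 1 - Real.exp h ^ 2 ≠ 0 := by rw [sq]; exact hne
    field_simp
    ring
  · -- β ≥ 1
    have hb1 : (1 : ℝ) ≤ (β : ℝ) := by exact_mod_cast hb
    have hx : h ≤ h * (β : ℝ) := by nlinarith
    have e2 : G1 (h * ((β : ℝ) - 1)) = G1 (h * (β : ℝ) - h) := by ring_nf
    have e3 : G1 (h * ((β : ℝ) + 1)) = G1 (h * (β : ℝ) + h) := by ring_nf
    rw [e2, e3, if_neg (by omega)]
    have := G1_key hh hx
    rw [this, mul_zero]
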